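/- Let d₁, d₂ ∈ ℕ, set d = d₁ + d₂, and let z ∈ ℂ with Re z > 0. If x₁ ∈ ℝ^{d₁} with x₁ ≠ 0, or d₁ = 1, then the function x₂ ↦ G^d_z(x₁, x₂) is integrable on ℝ^{d₂} and ∫_{ℝ^{d₂}} G^d_z(x₁, x₂) dx₂ = G^{d₁}_z(x₁). -/

import Mathlib

open MeasureTheory

/-- The Green's function `G^d_z` of `-Δ + z` on `ℝ^d`, for `Re z > 0`. -/
noncomputable def greenC (d : ℕ) (z : ℂ) (x : EuclideanSpace ℝ (Fin d)) : ℂ :=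
  ∫ t in Set.Ioi (0 : ℝ),
    (((4 * Real.pi * t) ^ (-(d : ℝ) / 2) : ℝ) : ℂ) *
      Complex.exp (-((‖x‖ ^ 2 / (4 * t) : ℝ) : ℂ) - z * (t : ℂ))

/-- The point `(x₁, x₂)` of `ℝ^{d₁+d₂}` obtained by concatenating `x₁ ∈ ℝ^{d₁}` and
`x₂ ∈ ℝ^{d₂}`. -/
noncomputable def epair {d₁ d₂ : ℕ} (x₁ : EuclideanSpace ℝ (Fin d₁))
    (x₂ : EuclideanSpace ℝ (Fin d₂)) : EuclideanSpace ℝ (Fin (d₁ + d₂)) :=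
  (WithLp.equiv 2 (Fin (d₁ + d₂) → ℝ)).symm
    (Fin.append (WithLp.equiv 2 (Fin d₁ → ℝ) x₁) (WithLp.equiv 2 (Fin d₂ → ℝ) x₂))

lemma aux_bound {p c : ℝ} (hp : 0 ≤ p) (hc : 0 < c) {t : ℝ} (ht : 0 < t) (ht1 : t ≤ 1) :
    t ^ (-p) * Real.exp (-c / t) ≤ ((Nat.factorial ⌈p⌉₊ : ℝ)) / c ^ ⌈p⌉₊ := by
  set n := ⌈p⌉₊ with hn
  have hnp : p ≤ (n : ℝ) := Nat.le_ceil p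
  have hct : 0 < c / t := div_pos hc ht
  have h1 : (c/t)^n / (Nat.factorial n : ℝ) ≤ Real.exp (c/t) :=
    Real.pow_div_factorial_le_exp _ hct.le n
  have h2 : Real.exp (-c / t) ≤ (Nat.factorial n : ℝ) / (c/t)^n := by
    rw [neg_div, Real.exp_neg]
    calc (Real.exp (c/t))⁻¹ ≤ ((c/t)^n / (Nat.factorial n : ℝ))⁻¹ := inv_anti₀ (by positivity) h1
      _ = (Nat.factorial n : ℝ) / (c/t)^n := inv_div _ _
  have h3 : t ^ (-p) * Real.exp (-c / t) ≤ t ^ (-p) * ((Nat.factorial n : ℝ) / (c/t)^n) :=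
    mul_le_mul_of_nonneg_left h2 (Real.rpow_nonneg ht.le _)
  refine h3.trans ?_
  have key : t ^ (-p) * t ^ (n:ℕ) = t ^ ((n:ℝ) - p) := by
    rw [← Real.rpow_natCast t n, ← Real.rpow_add ht]
    norm_num [sub_eq_neg_add]
  have hrw : t ^ (-p) * ((Nat.factorial n : ℝ) / (c/t)^n)
      = ((Nat.factorial n : ℝ) / c ^ n) * (t ^ (-p) * t ^ (n:ℕ)) := by
    rw [div_pow, div_div_eq_mul_div]; ring
  rw [hrw, key]
  exact mul_le_of_le_one_right (by positivity) (Real.rpow_le_one ht.le ht1 (by linarith))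

lemma aux_int {p a c : ℝ} (hp : 0 ≤ p) (ha : 0 < a) (hc : 0 ≤ c) (h : 0 < c ∨ p < 1) :
    IntegrableOn (fun t : ℝ => t ^ (-p) * Real.exp (-c / t - a * t)) (Set.Ioi 0) := by
  have hmeas : AEStronglyMeasurable (fun t : ℝ => t ^ (-p) * Real.exp (-c / t - a * t))
      (volume.restrict (Set.Ioi (0:ℝ))) := by
    apply Measurable.aestronglyMeasurable
    fun_prop
  have hIoi1 : IntegrableOn (fun t : ℝ => t ^ (-p) * Real.exp (-c / t - a * t)) (Set.Ioi 1) := by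
    refine Integrable.mono' (exp_neg_integrableOn_Ioi 1 ha) (hmeas.mono_measure
      (Measure.restrict_mono_set _ (Set.Ioi_subset_Ioi zero_le_one))) ?_
    filter_upwards [ae_restrict_mem measurableSet_Ioi] with t ht
    have ht0 : (0:ℝ) < t := lt_trans zero_lt_one ht
    rw [Real.norm_eq_abs, abs_of_nonneg (by positivity)]
    have h1 : t ^ (-p) ≤ 1 := Real.rpow_le_one_of_one_le_of_nonpos ht.le (by linarith)
    have h2 : Real.exp (-c / t - a * t) ≤ Real.exp (-(a * t)) := by
      apply Real.exp_le_exp.2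
      have : -c / t ≤ 0 := div_nonpos_of_nonpos_of_nonneg (by linarith) (by linarith)
      linarith
    calc t ^ (-p) * Real.exp (-c / t - a * t) ≤ 1 * Real.exp (-(a*t)) :=
          mul_le_mul h1 h2 (by positivity) zero_le_one
      _ = Real.exp (-a*t) := by rw [one_mul, neg_mul]
  have hIoc : IntegrableOn (fun t : ℝ => t ^ (-p) * Real.exp (-c / t - a * t)) (Set.Ioc 0 1) := by
    rcases h with hc' | hp1
    · -- bounded by constant
      refine Integrable.mono' (integrableOn_const (s := Set.Ioc (0:ℝ) 1) (μ := volume) (C := ((Nat.factorial ⌈p⌉₊ : ℝ)) / c ^ ⌈p⌉₊) measure_Ioc_lt_top.ne)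
        (hmeas.mono_measure (Measure.restrict_mono_set _ Set.Ioc_subset_Ioi_self)) ?_
      filter_upwards [ae_restrict_mem measurableSet_Ioc] with t ht
      rw [Real.norm_eq_abs,
        abs_of_nonneg (mul_nonneg (Real.rpow_nonneg ht.1.le _) (Real.exp_nonneg _))]
      calc t ^ (-p) * Real.exp (-c / t - a * t)
          ≤ t ^ (-p) * Real.exp (-c / t) := by
            apply mul_le_mul_of_nonneg_left _ (Real.rpow_nonneg ht.1.le _)
            apply Real.exp_le_exp.2; nlinarith [ht.1]
        _ ≤ ((Nat.factorial ⌈p⌉₊ : ℝ)) / c ^ ⌈p⌉₊ := aux_bound hp hc' ht.1 ht.2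
    · -- p < 1
      refine Integrable.mono' (g := fun t : ℝ => t ^ (-p)) ?_ (hmeas.mono_measure
        (Measure.restrict_mono_set _ Set.Ioc_subset_Ioi_self)) ?_
      · exact (intervalIntegral.intervalIntegrable_rpow' (by linarith : (-1:ℝ) < -p)).1
      filter_upwards [ae_restrict_mem measurableSet_Ioc] with t ht
      rw [Real.norm_eq_abs,
        abs_of_nonneg (mul_nonneg (Real.rpow_nonneg ht.1.le _) (Real.exp_nonneg _))]
      calc t ^ (-p) * Real.exp (-c / t - a * t) ≤ t ^ (-p) * 1 := by
            apply mul_le_mul_of_nonneg_left _ (Real.rpow_nonneg ht.1.le _)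
            rw [Real.exp_le_one_iff]
            have h1 : -c / t ≤ 0 := div_nonpos_of_nonpos_of_nonneg (by linarith) ht.1.le
            nlinarith [mul_pos ha ht.1]
        _ = t ^ (-p) := mul_one _
  have : Set.Ioi (0:ℝ) = Set.Ioc 0 1 ∪ Set.Ioi 1 := (Set.Ioc_union_Ioi_eq_Ioi zero_le_one).symm
  rw [this]
  exact hIoc.union hIoi1

lemma gauss_integrable {n : ℕ} {b : ℝ} (hb : 0 < b) :
    Integrable (fun v : EuclideanSpace ℝ (Fin n) => Real.exp (-b * ‖v‖ ^ 2)) := by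
  have ic := GaussianFourier.integrable_cexp_neg_mul_sq_norm_add
      (V := EuclideanSpace ℝ (Fin n)) (b := (b : ℂ)) (by simpa using hb) 0 0
  refine ic.norm.congr (Filter.Eventually.of_forall fun v => ?_)
  have : ((-(b:ℂ)) * (‖v‖:ℂ) ^ 2 + 0 * (inner ℝ (0 : EuclideanSpace ℝ (Fin n)) v : ℝ)).re
      = -b * ‖v‖ ^ 2 := by
    simp [Complex.mul_re, ← Complex.ofReal_pow]
  simp only [Complex.norm_exp, this]

lemma norm_epair_sq {d₁ d₂ : ℕ} (x₁ : EuclideanSpace ℝ (Fin d₁))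
    (x₂ : EuclideanSpace ℝ (Fin d₂)) :
    ‖epair x₁ x₂‖ ^ 2 = ‖x₁‖ ^ 2 + ‖x₂‖ ^ 2 := by
  have h1 : ∀ {n : ℕ} (x : EuclideanSpace ℝ (Fin n)), ‖x‖ ^ 2 = ∑ i, x i ^ 2 := by
    intro n x
    rw [EuclideanSpace.norm_eq, Real.sq_sqrt (Finset.sum_nonneg fun i _ => sq_nonneg _)]
    simp [sq_abs]
  rw [h1, h1, h1]
  simp [epair, Fin.sum_univ_add, WithLp.equiv_symm_apply, PiLp.toLp_apply]

theorem greenC_integral_second_variable (d₁ d₂ : ℕ) (hd₁ : 0 < d₁) (hd₂ : 0 < d₂)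
    (z : ℂ) (hz : 0 < z.re) (x₁ : EuclideanSpace ℝ (Fin d₁)) (hx₁ : x₁ ≠ 0 ∨ d₁ = 1) :
    Integrable (fun x₂ : EuclideanSpace ℝ (Fin d₂) => greenC (d₁ + d₂) z (epair x₁ x₂)) volume ∧
    (∫ x₂ : EuclideanSpace ℝ (Fin d₂), greenC (d₁ + d₂) z (epair x₁ x₂)) = greenC d₁ z x₁ := by
  set E₂ := EuclideanSpace ℝ (Fin d₂)
  set ν := volume.restrict (Set.Ioi (0:ℝ)) with hν
  set K : ℝ → ℂ := fun t => (((4 * Real.pi * t) ^ (-(d₁ : ℝ) / 2) : ℝ) : ℂ) *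
      Complex.exp (-((‖x₁‖ ^ 2 / (4 * t) : ℝ) : ℂ) - z * (t : ℂ)) with hK
  set g : ℝ → E₂ → ℝ := fun t x₂ =>
      (4 * Real.pi * t) ^ (-(d₂ : ℝ) / 2) * Real.exp (-(1 / (4 * t)) * ‖x₂‖ ^ 2) with hg
  set f : E₂ → ℝ → ℂ := fun x₂ t => K t * (g t x₂ : ℂ) with hf
  have pi_pos := Real.pi_pos
  -- factorization of the integrand
  have hfact : ∀ t ∈ Set.Ioi (0:ℝ), ∀ x₂ : E₂,
      (((4 * Real.pi * t) ^ (-((d₁ + d₂ : ℕ) : ℝ) / 2) : ℝ) : ℂ) *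
        Complex.exp (-((‖epair x₁ x₂‖ ^ 2 / (4 * t) : ℝ) : ℂ) - z * (t : ℂ)) = f x₂ t := by
    intro t ht x₂
    have ht' : (0:ℝ) < 4 * Real.pi * t := by
      have := ht.out; positivity
    have hsplit : (4 * Real.pi * t) ^ (-((d₁ + d₂ : ℕ) : ℝ) / 2)
        = (4 * Real.pi * t) ^ (-(d₁ : ℝ) / 2) * (4 * Real.pi * t) ^ (-(d₂ : ℝ) / 2) := by
      rw [← Real.rpow_add ht']
      congr 1
      push_cast
      ring
    have hexp : (-((‖epair x₁ x₂‖ ^ 2 / (4 * t) : ℝ) : ℂ) - z * (t : ℂ))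
        = (-((‖x₁‖ ^ 2 / (4 * t) : ℝ) : ℂ) - z * (t : ℂ))
          + ((-(1 / (4 * t)) * ‖x₂‖ ^ 2 : ℝ) : ℂ) := by
      rw [norm_epair_sq]
      have ht0 : (t : ℂ) ≠ 0 := by
        exact_mod_cast ne_of_gt ht.out
      push_cast
      field_simp
      ring
    rw [hexp, Complex.exp_add, hsplit, hf, hK, hg]
    push_cast [Complex.ofReal_exp]
    ring
  -- the Gaussian integral
  have hgauss : ∀ t ∈ Set.Ioi (0:ℝ), (∫ x₂ : E₂, g t x₂) = 1 := by
    intro t ht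
    have ht0 : (0:ℝ) < t := ht.out
    have hb : (0:ℝ) < 1 / (4 * t) := by positivity
    have ht' : (0:ℝ) < 4 * Real.pi * t := by positivity
    rw [hg]
    simp only
    rw [MeasureTheory.integral_const_mul,
      GaussianFourier.integral_rexp_neg_mul_sq_norm hb]
    rw [show Real.pi / (1 / (4 * t)) = 4 * Real.pi * t by field_simp]
    rw [show (Module.finrank ℝ E₂ : ℝ) = (d₂ : ℝ) by norm_cast; simp [E₂]]
    rw [← Real.rpow_add ht', show -(d₂:ℝ)/2 + (d₂:ℝ)/2 = 0 by ring, Real.rpow_zero]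
  have hg_int : ∀ t ∈ Set.Ioi (0:ℝ), Integrable (g t) volume := by
    intro t ht
    have ht0 : (0:ℝ) < t := ht.out
    have hb : (0:ℝ) < 1 / (4 * t) := by positivity
    exact (gauss_integrable hb).const_mul _
  have hg_nonneg : ∀ t ∈ Set.Ioi (0:ℝ), ∀ x₂ : E₂, 0 ≤ g t x₂ := by
    intro t ht x₂
    have ht0 : (0:ℝ) < t := ht.out
    have ht' : (0:ℝ) < 4 * Real.pi * t := by positivity
    rw [hg]
    positivity
  -- the norm of K
  have hKnorm : ∀ t ∈ Set.Ioi (0:ℝ), ‖K t‖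
      = (4 * Real.pi * t) ^ (-(d₁ : ℝ) / 2) * Real.exp (-(‖x₁‖ ^ 2 / 4) / t - z.re * t) := by
    intro t ht
    have ht0 : (0:ℝ) < t := ht.out
    have ht' : (0:ℝ) < 4 * Real.pi * t := by positivity
    rw [hK]
    simp only [norm_mul, Complex.norm_real, Complex.norm_exp]
    rw [Real.norm_eq_abs, abs_of_pos (Real.rpow_pos_of_pos ht' _)]
    congr 1
    have hre : ∀ r : ℝ, (-(r:ℂ) - z * (t:ℂ)).re = -r - z.re * t := fun r => by
      simp [Complex.mul_re]
    rw [hre]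
    congr 1
    field_simp
  have hKint : IntegrableOn (fun t => ‖K t‖) (Set.Ioi (0:ℝ)) volume := by
    have hcase : 0 < ‖x₁‖ ^ 2 / 4 ∨ (d₁ : ℝ) / 2 < 1 := by
      rcases hx₁ with h | h
      · left
        have : 0 < ‖x₁‖ := norm_pos_iff.2 h
        positivity
      · right; rw [h]; norm_num
    have base := aux_int (p := (d₁ : ℝ) / 2) (a := z.re) (c := ‖x₁‖ ^ 2 / 4)
      (by positivity) hz (by positivity) hcase
    have base2 := base.const_mul ((4 * Real.pi) ^ (-(d₁ : ℝ) / 2))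
    refine IntegrableOn.congr_fun base2 (fun t ht => ?_) measurableSet_Ioi
    have ht0 : (0:ℝ) < t := ht.out
    rw [hKnorm t ht, show (4 : ℝ) * Real.pi * t = (4 * Real.pi) * t by ring,
      Real.mul_rpow (by positivity) ht0.le, neg_div]
    ring
  -- measurability of the joint function
  have hmeas : AEStronglyMeasurable (Function.uncurry f) (volume.prod ν) := by
    apply Measurable.aestronglyMeasurable
    simp only [Function.uncurry, hf, hK, hg]
    fun_prop
  -- joint integrability
  have hjoint : Integrable (Function.uncurry f) (volume.prod ν) := by
    rw [MeasureTheory.integrable_prod_iff' hmeas]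
    constructor
    · filter_upwards [ae_restrict_mem measurableSet_Ioi] with t ht
      exact (hg_int t ht).ofReal.const_mul (K t)
    · have heq : (fun t => ∫ x₂ : E₂, ‖Function.uncurry f (x₂, t)‖) =ᵐ[ν]
          fun t => ‖K t‖ := by
        filter_upwards [ae_restrict_mem measurableSet_Ioi] with t ht
        have h1 : ∀ x₂ : E₂, ‖f x₂ t‖ = ‖K t‖ * g t x₂ := fun x₂ => by
          rw [hf]
          simp only [norm_mul, Complex.norm_real]
          rw [Real.norm_eq_abs, abs_of_nonneg (hg_nonneg t ht x₂)]
        simp only [Function.uncurry_apply_pair, h1]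
        rw [MeasureTheory.integral_const_mul, hgauss t ht, mul_one]
      exact hKint.congr heq.symm
  have hgreen : ∀ x₂ : E₂, greenC (d₁ + d₂) z (epair x₁ x₂) = ∫ t, f x₂ t ∂ν := by
    intro x₂
    exact MeasureTheory.setIntegral_congr_fun measurableSet_Ioi (fun t ht => hfact t ht x₂)
  constructor
  · refine hjoint.integral_prod_left.congr (Filter.Eventually.of_forall fun x₂ => ?_)
    exact (hgreen x₂).symm
  · calc (∫ x₂ : E₂, greenC (d₁ + d₂) z (epair x₁ x₂))
        = ∫ x₂ : E₂, ∫ t, f x₂ t ∂ν :=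
          integral_congr_ae (Filter.Eventually.of_forall hgreen)
      _ = ∫ t, (∫ x₂ : E₂, f x₂ t) ∂ν := MeasureTheory.integral_integral_swap hjoint
      _ = ∫ t in Set.Ioi (0:ℝ), K t := by
          refine MeasureTheory.setIntegral_congr_fun measurableSet_Ioi (fun t ht => ?_)
          rw [hf]
          simp only
          rw [MeasureTheory.integral_const_mul,
            show (∫ a : E₂, ((g t a : ℝ) : ℂ)) = ((∫ a : E₂, g t a : ℝ) : ℂ) from
              integral_ofReal, hgauss t ht]
          simp
      _ = greenC d₁ z x₁ := rfl
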